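/- Let A be an ℕ-graded ring, P a finitely generated ℤ-graded projective right A-module, and for λ ∈ ℤ let F^λP be the A-submodule of P generated by ⋃_{ω ≤ λ} P_ω. Then F^λP is a graded A-submodule of P, and the assignment P ↦ F^λP preserves (split) short exact sequences of finitely generated graded projective A-modules. -/

import Mathlib

set_option maxHeartbeats 1000000
set_option synthInstance.maxHeartbeats 400000

universe u

/-- `F^λ P`: the `A`-submodule of a graded module `P` generated by the homogeneous
elements of degree at most `λ`. -/
def filtration {A : Type u} [Ring A] (P : Type u) [AddCommGroup P] [Module A P]
    (ℳ : ℤ → AddSubgroup P) (lam : ℤ) : Submodule A P :=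
  Submodule.span A {x : P | ∃ ω ≤ lam, x ∈ ℳ ω}

section helpers

open DirectSum

variable {A : Type u} [Ring A] {𝒜 : ℤ → AddSubgroup A} [GradedRing 𝒜]

/-- Master lemma: the components of an element written as a sum of homogeneous pieces. -/
lemma decompose_finsum {P : Type u} [AddCommGroup P] (ℳ : ℤ → AddSubgroup P)
    [DirectSum.Decomposition ℳ] (s : Finset ℤ) (c : ℤ → P) (hc : ∀ j ∈ s, c j ∈ ℳ j)
    (n : ℤ) :
    (DirectSum.decompose ℳ (∑ j ∈ s, c j) n : P) = if n ∈ s then c n else 0 := by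
  classical
  rw [DirectSum.decompose_sum, DFinsupp.finset_sum_apply, AddSubmonoidClass.coe_finset_sum]
  calc ∑ j ∈ s, (DirectSum.decompose ℳ (c j) n : P)
      = ∑ j ∈ s, (if j = n then c j else 0) := by
        refine Finset.sum_congr rfl fun j hj => ?_
        rcases eq_or_ne j n with rfl | hne
        · simpa using DirectSum.decompose_of_mem_same ℳ (hc j hj)
        · simp [hne, DirectSum.decompose_of_mem_ne ℳ (hc j hj) hne]
    _ = if n ∈ s then c n else 0 := Finset.sum_ite_eq' s n c

/-- Graded linear maps commute with decomposition. -/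
lemma decompose_map {P P'' : Type u} [AddCommGroup P] [Module A P]
    [AddCommGroup P''] [Module A P'']
    (ℳ : ℤ → AddSubgroup P) [DirectSum.Decomposition ℳ]
    (ℳ'' : ℤ → AddSubgroup P'') [DirectSum.Decomposition ℳ'']
    (g : P →ₗ[A] P'') (hg : ∀ (n : ℤ) (x : P), x ∈ ℳ n → g x ∈ ℳ'' n)
    (x : P) (n : ℤ) :
    (DirectSum.decompose ℳ'' (g x) n : P'') = g (DirectSum.decompose ℳ x n : P) := by
  classical
  conv_lhs => rw [← DirectSum.sum_support_decompose ℳ x]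
  rw [map_sum, decompose_finsum ℳ'' _ _ (fun j hj => hg j _ (DirectSum.decompose ℳ x j).2)]
  split_ifs with h
  · rfl
  · rw [DFinsupp.notMem_support_iff] at h
    rw [h]
    simp

/-- `decompose` of a homogeneous scalar times an element. -/
lemma decompose_homog_smul {P : Type u} [AddCommGroup P] [Module A P]
    (ℳ : ℤ → AddSubgroup P) [DirectSum.Decomposition ℳ] [SetLike.GradedSMul 𝒜 ℳ]
    {a : A} {i : ℤ} (ha : a ∈ 𝒜 i) (x : P) (n : ℤ) :
    (DirectSum.decompose ℳ (a • x) n : P) = a • (DirectSum.decompose ℳ x (n - i) : P) := by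
  classical
  have hmem : ∀ j : ℤ, ∀ y ∈ ℳ j, a • y ∈ ℳ (i + j) := fun j y hy =>
    SetLike.GradedSMul.smul_mem (A := 𝒜) (B := ℳ) ha hy
  have hii : ∀ j : ℤ, i + j - i = j := fun j => by omega
  have hax : a • x = ∑ j ∈ (DirectSum.decompose ℳ x).support.image (i + ·),
      a • (DirectSum.decompose ℳ x (j - i) : P) := by
    rw [Finset.sum_image (by intro u hu v hv h; exact add_left_cancel h)]
    rw [Finset.sum_congr rfl fun j _ => by rw [hii j]]
    rw [← Finset.smul_sum, DirectSum.sum_support_decompose]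
  rw [hax, decompose_finsum ℳ _ _ ?_ n]
  · split_ifs with h
    · rfl
    · have hz : (DirectSum.decompose ℳ x (n - i) : P) = 0 := by
        have hns : n - i ∉ (DirectSum.decompose ℳ x).support :=
          fun hc => h (Finset.mem_image.mpr ⟨n - i, hc, by omega⟩)
        rw [DFinsupp.notMem_support_iff] at hns
        rw [hns]; rfl
      rw [hz, smul_zero]
  · intro j hj
    have := hmem (j - i) _ (DirectSum.decompose ℳ x (j - i)).2
    rwa [show i + (j - i) = j by omega] at this

/-- Part 1 core: `filtration` is a graded submodule. -/
lemma filtration_graded {P : Type u} [AddCommGroup P] [Module A P]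
    (ℳ : ℤ → AddSubgroup P) [DirectSum.Decomposition ℳ] [SetLike.GradedSMul 𝒜 ℳ]
    (lam : ℤ) :
    ∀ x ∈ filtration (A := A) P ℳ lam, ∀ n : ℤ,
      (DirectSum.decompose ℳ x n : P) ∈ filtration (A := A) P ℳ lam := by
  classical
  intro x hx
  refine Submodule.span_induction ?_ ?_ ?_ ?_ hx
  · rintro y ⟨ω, hω, hy⟩ n
    rcases eq_or_ne ω n with rfl | hne
    · rw [DirectSum.decompose_of_mem_same ℳ hy]
      exact Submodule.subset_span ⟨ω, hω, hy⟩
    · rw [DirectSum.decompose_of_mem_ne ℳ hy hne]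
      exact Submodule.zero_mem _
  · intro n; rw [DirectSum.decompose_zero]; simp
  · intro y z _ _ hy hz n
    rw [DirectSum.decompose_add, DFinsupp.add_apply, AddSubgroup.coe_add]
    exact Submodule.add_mem _ (hy n) (hz n)
  · intro a y _ hy n
    have hay : a • y = ∑ i ∈ (DirectSum.decompose 𝒜 a).support,
        (DirectSum.decompose 𝒜 a i : A) • y := by
      rw [← Finset.sum_smul, DirectSum.sum_support_decompose]
    rw [hay, DirectSum.decompose_sum, DFinsupp.finset_sum_apply, AddSubmonoidClass.coe_finset_sum]
    refine Submodule.sum_mem _ fun i _ => ?_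
    rw [decompose_homog_smul (𝒜 := 𝒜) ℳ (DirectSum.decompose 𝒜 a i).2]
    exact Submodule.smul_mem _ _ (hy (n - i))

end helpers

/-- Let `A` be an `ℕ`-graded ring and `λ ∈ ℤ`. For finitely generated graded projective
`A`-modules `P`, the submodule `F^λ P` generated by homogeneous elements of degree `≤ λ`
is a graded submodule, and `P ↦ F^λ P` preserves (split) short exact sequences of
finitely generated graded projective `A`-modules. -/
theorem filtration_graded_and_exact (A : Type u) [Ring A] (𝒜 : ℤ → AddSubgroup A)
    [GradedRing 𝒜] (hsupp : ∀ n : ℤ, n < 0 → 𝒜 n = ⊥) (lam : ℤ) :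
    (∀ (P : Type u) [AddCommGroup P] [Module A P] (ℳ : ℤ → AddSubgroup P)
      [DirectSum.Decomposition ℳ] [SetLike.GradedSMul 𝒜 ℳ]
      [Module.Finite A P] [Module.Projective A P],
      ∀ x ∈ filtration (A := A) P ℳ lam, ∀ n : ℤ,
        (DirectSum.decompose ℳ x n : P) ∈ filtration (A := A) P ℳ lam) ∧
    (∀ (P' P P'' : Type u)
      [AddCommGroup P'] [Module A P'] [AddCommGroup P] [Module A P]
      [AddCommGroup P''] [Module A P'']
      (ℳ' : ℤ → AddSubgroup P') (ℳ : ℤ → AddSubgroup P) (ℳ'' : ℤ → AddSubgroup P'')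
      [DirectSum.Decomposition ℳ'] [SetLike.GradedSMul 𝒜 ℳ']
      [DirectSum.Decomposition ℳ] [SetLike.GradedSMul 𝒜 ℳ]
      [DirectSum.Decomposition ℳ''] [SetLike.GradedSMul 𝒜 ℳ'']
      [Module.Finite A P'] [Module.Projective A P']
      [Module.Finite A P] [Module.Projective A P]
      [Module.Finite A P''] [Module.Projective A P'']
      (f : P' →ₗ[A] P) (g : P →ₗ[A] P''),
      (∀ (n : ℤ) (x : P'), x ∈ ℳ' n → f x ∈ ℳ n) →
      (∀ (n : ℤ) (x : P), x ∈ ℳ n → g x ∈ ℳ'' n) →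
      Function.Injective f → Function.Surjective g → LinearMap.range f = LinearMap.ker g →
        (filtration P' ℳ' lam).map f = filtration P ℳ lam ⊓ LinearMap.ker g ∧
        (filtration P ℳ lam).map g = filtration P'' ℳ'' lam) := by
  classical
  constructor
  · intro P _ _ ℳ _ _ _ _
    exact filtration_graded (𝒜 := 𝒜) ℳ lam
  · intro P' P P'' _ _ _ _ _ _ ℳ' ℳ ℳ'' _ _ _ _ _ _ _ _ _ _ _ _ f g hf hg hfinj hgsurj hexact
    -- a splitting of g
    obtain ⟨s, hsc⟩ := Module.projective_lifting_property g (LinearMap.id) hgsurj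
    have hs : ∀ x'' : P'', g (s x'') = x'' := fun x'' => by
      simpa using LinearMap.congr_fun hsc x''
    -- the degree-zero graded part of s
    let φ : DirectSum ℤ (fun n => ℳ'' n) →+ P := DirectSum.toAddMonoid fun n =>
      { toFun := fun x => (DirectSum.decompose ℳ (s (x : P'')) n : P)
        map_zero' := by simp
        map_add' := fun x y => by
          simp [map_add, DirectSum.decompose_add] }
    let s0f : P'' → P := fun x'' => φ (DirectSum.decompose ℳ'' x'')
    have hkey : ∀ (j : ℤ) (x'' : P''), (h : x'' ∈ ℳ'' j) →
        s0f x'' = (DirectSum.decompose ℳ (s x'') j : P) := by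
      intro j x'' h
      show φ (DirectSum.decompose ℳ'' x'') = _
      rw [DirectSum.decompose_of_mem ℳ'' h]
      simp [φ, DirectSum.toAddMonoid_of]
    have hadd : ∀ x y : P'', s0f (x + y) = s0f x + s0f y := fun x y => by
      show φ _ = φ _ + φ _
      rw [DirectSum.decompose_add, map_add]
    have haddsum : ∀ (t : Finset ℤ) (c : ℤ → P''), s0f (∑ j ∈ t, c j) = ∑ j ∈ t, s0f (c j) := by
      intro t c
      show φ _ = _
      rw [DirectSum.decompose_sum, map_sum]
    -- homogeneous smul compatibility
    have hsmul_homog : ∀ {i : ℤ} {a : A}, a ∈ 𝒜 i → ∀ {j : ℤ} {x'' : P''}, x'' ∈ ℳ'' j →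
        s0f (a • x'') = a • s0f x'' := by
      intro i a ha j x'' hx''
      have h1 : a • x'' ∈ ℳ'' (i + j) := SetLike.GradedSMul.smul_mem (A := 𝒜) (B := ℳ'') ha hx''
      rw [hkey _ _ h1, hkey _ _ hx'', map_smul,
        decompose_homog_smul (𝒜 := 𝒜) ℳ ha, show i + j - i = j by omega]
    have hsmul_h2 : ∀ {i : ℤ} {a : A}, a ∈ 𝒜 i → ∀ x'' : P'',
        s0f (a • x'') = a • s0f x'' := by
      intro i a ha x''
      conv_lhs => rw [← DirectSum.sum_support_decompose ℳ'' x'']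
      rw [Finset.smul_sum, haddsum]
      rw [Finset.sum_congr rfl fun j _ => hsmul_homog ha (DirectSum.decompose ℳ'' x'' j).2]
      rw [← Finset.smul_sum, ← haddsum, DirectSum.sum_support_decompose]
    have hsmul : ∀ (a : A) (x'' : P''), s0f (a • x'') = a • s0f x'' := by
      intro a x''
      conv_lhs => rw [← DirectSum.sum_support_decompose 𝒜 a]
      rw [Finset.sum_smul, haddsum]
      rw [Finset.sum_congr rfl fun i _ => hsmul_h2 (DirectSum.decompose 𝒜 a i).2 x'']
      rw [← Finset.sum_smul, DirectSum.sum_support_decompose]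
    let s0 : P'' →ₗ[A] P := { toFun := s0f, map_add' := hadd, map_smul' := hsmul }
    have hs0_graded : ∀ (j : ℤ) (x'' : P''), x'' ∈ ℳ'' j → s0 x'' ∈ ℳ j := by
      intro j x'' h
      show s0f x'' ∈ ℳ j
      rw [hkey _ _ h]
      exact (DirectSum.decompose ℳ (s x'') j).2
    have hgs0 : ∀ x'' : P'', g (s0 x'') = x'' := by
      intro x''
      show g (s0f x'') = x''
      conv_lhs => rw [← DirectSum.sum_support_decompose ℳ'' x'']
      rw [haddsum, map_sum]
      rw [Finset.sum_congr rfl fun j _ => ?_, DirectSum.sum_support_decompose ℳ'' x'']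
      rw [hkey _ _ (DirectSum.decompose ℳ'' x'' j).2, ← decompose_map ℳ ℳ'' g hg, hs,
        DirectSum.decompose_of_mem_same ℳ'' (DirectSum.decompose ℳ'' x'' j).2]
    -- statement (b)
    have hb : (filtration P ℳ lam).map g = filtration P'' ℳ'' lam := by
      apply le_antisymm
      · rw [filtration, Submodule.map_span]
        apply Submodule.span_le.mpr
        rintro _ ⟨x, ⟨ω, hω, hx⟩, rfl⟩
        exact Submodule.subset_span ⟨ω, hω, hg ω x hx⟩
      · rw [show filtration P'' ℳ'' lam = Submodule.span A {x : P'' | ∃ ω ≤ lam, x ∈ ℳ'' ω} from rfl]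
        apply Submodule.span_le.mpr
        rintro x'' ⟨ω, hω, hx''⟩
        obtain ⟨x, rfl⟩ := hgsurj x''
        refine Submodule.mem_map.mpr ⟨(DirectSum.decompose ℳ x ω : P),
          Submodule.subset_span ⟨ω, hω, (DirectSum.decompose ℳ x ω).2⟩, ?_⟩
        rw [← decompose_map ℳ ℳ'' g hg, DirectSum.decompose_of_mem_same ℳ'' hx'']
    -- statement (a), easy inclusion
    have haL : (filtration P' ℳ' lam).map f ≤ filtration P ℳ lam ⊓ LinearMap.ker g := by
      refine le_inf ?_ ?_
      · rw [filtration, Submodule.map_span]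
        apply Submodule.span_le.mpr
        rintro _ ⟨x', ⟨ω, hω, hx'⟩, rfl⟩
        exact Submodule.subset_span ⟨ω, hω, hf ω x' hx'⟩
      · rintro _ ⟨x', _, rfl⟩
        rw [← hexact]
        exact LinearMap.mem_range_self f x'
    -- statement (a), hard inclusion
    have hπ : ∀ x ∈ filtration (A := A) P ℳ lam,
        x - s0 (g x) ∈ (filtration P' ℳ' lam).map f := by
      intro x hx
      refine Submodule.span_induction ?_ ?_ ?_ ?_ hx
      · rintro y ⟨ω, hω, hy⟩
        have h1 : y - s0 (g y) ∈ ℳ ω :=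
          AddSubgroup.sub_mem _ hy (hs0_graded ω _ (hg ω y hy))
        have h2 : g (y - s0 (g y)) = 0 := by
          rw [map_sub, hgs0, sub_self]
        obtain ⟨x', hx'⟩ : y - s0 (g y) ∈ LinearMap.range f := by
          rw [hexact]; exact LinearMap.mem_ker.mpr h2
        have hx'hom : x' ∈ ℳ' ω := by
          have hxe : x' = (DirectSum.decompose ℳ' x' ω : P') := by
            apply hfinj
            rw [← decompose_map ℳ' ℳ f hf, hx', DirectSum.decompose_of_mem_same ℳ h1]
          rw [hxe]
          exact (DirectSum.decompose ℳ' x' ω).2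
        exact ⟨x', Submodule.subset_span ⟨ω, hω, hx'hom⟩, hx'⟩
      · simp
      · intro y z _ _ hy hz
        have he : (y + z) - s0 (g (y + z)) = (y - s0 (g y)) + (z - s0 (g z)) := by
          rw [map_add, map_add]; abel
        rw [he]; exact Submodule.add_mem _ hy hz
      · intro a y _ hy
        have he : (a • y) - s0 (g (a • y)) = a • (y - s0 (g y)) := by
          rw [map_smul, map_smul, smul_sub]
        rw [he]; exact Submodule.smul_mem _ _ hy
    refine ⟨le_antisymm haL ?_, hb⟩
    rintro x ⟨hx1, hx2⟩
    have := hπ x hx1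
    rwa [LinearMap.mem_ker.mp hx2, map_zero, sub_zero] at this
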